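/- Let A = [a,b] ⊂ ℝ be a compact interval, let D ≥ 1, let 0 < ε ≤ 4D, and let p, q : A → ℝ each be Lipschitz with constant D. Suppose there is x* ∈ A with p(x*) − q(x*) > ε and [x* − ε/(4D), x* + ε/(4D)] ⊆ A. Then there exists g : A → ℝ with sup_{x∈A} |g(x)| + Lip(g) ≤ 1 such that ∫_A g(x)(p(x) − q(x)) dx ≥ ε³/(64D²); in particular ‖P − Q‖_BL ≥ ε³/(64D²), where P and Q are the signed measures with Lebesgue densities p and q. -/

import Mathlib

open MeasureTheory Set

/-- A test function for the bounded Lipschitz norm on the interval `[a, b]`: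
`g` satisfies `sup_{x ∈ [a,b]} |g(x)| + Lip(g) ≤ 1`, expressed via a sup-bound `c`
and a Lipschitz constant `L` on `[a,b]` with `c + L ≤ 1`. -/
def IsBLTestOn (a b : ℝ) (g : ℝ → ℝ) : Prop :=
  ∃ c L : ℝ, 0 ≤ c ∧ 0 ≤ L ∧ c + L ≤ 1 ∧
    (∀ x ∈ Icc a b, |g x| ≤ c) ∧
    (∀ x ∈ Icc a b, ∀ y ∈ Icc a b, |g x - g y| ≤ L * |x - y|)

/-- The bounded Lipschitz norm `‖P - Q‖_BL` of the difference of the signed measures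
`P`, `Q` on `[a,b]` with Lebesgue densities `p`, `q`:
`sup { |∫_{[a,b]} g·(p - q) dx| : sup|g| + Lip(g) ≤ 1 }`. -/
noncomputable def blNormDiff (a b : ℝ) (p q : ℝ → ℝ) : ℝ :=
  sSup {r : ℝ | ∃ g : ℝ → ℝ, IsBLTestOn a b g ∧
    r = |∫ x in Icc a b, g x * (p x - q x)|}

private lemma lin_int1 (A B c : ℝ) :
    ∫ x in A..B, (x + c)/2 = (B^2/2 - A^2/2 + c*(B-A))/2 := by
  rw [intervalIntegral.integral_div,
    intervalIntegral.integral_add intervalIntegral.intervalIntegrable_id intervalIntegrable_const,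
    integral_id, intervalIntegral.integral_const, smul_eq_mul]
  ring

private lemma lin_int2 (A B c : ℝ) :
    ∫ x in A..B, (-x + c)/2 = (-(B^2/2) + A^2/2 + c*(B-A))/2 := by
  rw [intervalIntegral.integral_div]
  simp only [show ∀ x : ℝ, -x + c = c - x from fun x => by ring]
  rw [intervalIntegral.integral_sub intervalIntegrable_const
      intervalIntegral.intervalIntegrable_id,
    integral_id, intervalIntegral.integral_const, smul_eq_mul]
  ring

/-- If `p, q` are `D`-Lipschitz on `[a,b]` and `p(x*) - q(x*) > ε` at a point `x*` with
`[x* - ε/(4D), x* + ε/(4D)] ⊆ [a,b]`, then there is a BL test function `g` with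
`∫ g·(p - q) ≥ ε³/(64D²)`; in particular `‖P - Q‖_BL ≥ ε³/(64D²)`, where `P`, `Q` are
the signed measures with Lebesgue densities `p`, `q`. -/
theorem stmt_6 {a b D ε xs : ℝ} (hab : a < b) (hD : 1 ≤ D)
    (hε : 0 < ε) (hε' : ε ≤ 4 * D) {p q : ℝ → ℝ}
    (hplip : ∀ x ∈ Icc a b, ∀ y ∈ Icc a b, |p x - p y| ≤ D * |x - y|)
    (hqlip : ∀ x ∈ Icc a b, ∀ y ∈ Icc a b, |q x - q y| ≤ D * |x - y|)
    (hxs : xs ∈ Icc a b) (hgap : p xs - q xs > ε)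
    (hsub : Icc (xs - ε / (4 * D)) (xs + ε / (4 * D)) ⊆ Icc a b) :
    ∃ g : ℝ → ℝ, IsBLTestOn a b g ∧
      ε ^ 3 / (64 * D ^ 2) ≤ ∫ x in Icc a b, g x * (p x - q x) ∧
      ε ^ 3 / (64 * D ^ 2) ≤ blNormDiff a b p q := by
  have hD0 : (0:ℝ) < D := lt_of_lt_of_le one_pos hD
  set s : ℝ := ε / (4 * D) with hs_def
  have hs0 : 0 < s := by positivity
  have hs1 : s ≤ 1 := by rw [hs_def, div_le_one (by positivity)]; linarith
  have hDs : D * s = ε / 4 := by rw [hs_def]; field_simp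
  set g : ℝ → ℝ := fun x => max 0 ((s - |x - xs|)/2) with hg_def
  have hg0 : ∀ x, 0 ≤ g x := fun x => le_max_left _ _
  have hgc : ∀ x, g x ≤ s/2 := fun x =>
    max_le (by positivity) (by have := abs_nonneg (x - xs); linarith)
  have hgzero : ∀ x, s ≤ |x - xs| → g x = 0 := fun x hx =>
    max_eq_left (by linarith)
  have hglip : ∀ x y, |g x - g y| ≤ 1/2 * |x - y| := by
    intro x y
    have h1 : |g x - g y| ≤ |(s - |x - xs|)/2 - (s - |y - xs|)/2| := by
      simp only [hg_def]
      rw [max_comm 0 ((s - |x - xs|)/2), max_comm 0 ((s - |y - xs|)/2)]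
      exact abs_max_sub_max_le_abs _ _ _
    have h2 : (s - |x - xs|)/2 - (s - |y - xs|)/2 = (|y - xs| - |x - xs|)/2 := by ring
    rw [h2, abs_div] at h1
    have h3 := abs_abs_sub_abs_le_abs_sub (y - xs) (x - xs)
    rw [sub_sub_sub_cancel_right] at h3
    have h4 : |y - x| = |x - y| := abs_sub_comm _ _
    rw [show |(2:ℝ)| = 2 by norm_num] at h1
    linarith
  have hg_cont : Continuous g := by
    simp only [hg_def]
    exact continuous_const.max (((continuous_const.sub
      ((continuous_id.sub continuous_const).abs)).div_const 2))
  have hpq_cont : ContinuousOn (fun x => p x - q x) (Icc a b) := by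
    have h2D : LipschitzOnWith (Real.toNNReal (2*D)) (fun x => p x - q x) (Icc a b) := by
      apply LipschitzOnWith.of_dist_le_mul
      intro x hx y hy
      simp only [Real.dist_eq]
      have hp := hplip x hx y hy
      have hq := hqlip x hx y hy
      have habs : |(p x - q x) - (p y - q y)| ≤ |p x - p y| + |q x - q y| := by
        have : (p x - q x) - (p y - q y) = (p x - p y) - (q x - q y) := by ring
        rw [this]; exact abs_sub _ _
      rw [Real.coe_toNNReal _ (by positivity)]
      linarith
    exact h2D.continuousOn
  have hf_int : IntegrableOn (fun x => g x * (p x - q x)) (Icc a b) volume :=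
    (hg_cont.continuousOn.mul hpq_cont).integrableOn_Icc
  -- pointwise lower bound
  have hpt : ∀ x ∈ Icc a b, ε/2 * g x ≤ g x * (p x - q x) := by
    intro x hx
    rcases le_or_gt s |x - xs| with h | h
    · rw [hgzero x h]; simp
    · have hxm := abs_lt.1 h
      have hxmem : x ∈ Icc (xs - s) (xs + s) := ⟨by linarith, by linarith⟩
      have hxab := hsub hxmem
      have hp := hplip x hxab xs hxs
      have hq := hqlip x hxab xs hxs
      have hle : D * |x - xs| ≤ ε/4 := by
        rw [← hDs]; exact mul_le_mul_of_nonneg_left h.le hD0.le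
      have hp' := abs_le.1 (le_trans hp hle)
      have hq' := abs_le.1 (le_trans hq hle)
      have hpq2 : ε/2 ≤ p x - q x := by linarith
      have := hg0 x
      nlinarith
  have hI1 : ∫ x in Icc a b, ε/2 * g x ≤ ∫ x in Icc a b, g x * (p x - q x) :=
    setIntegral_mono_on ((continuous_const.mul hg_cont).integrableOn_Icc) hf_int
      measurableSet_Icc hpt
  have hI2 : ∫ x in Icc a b, ε/2 * g x = ε/2 * ∫ x in Icc a b, g x :=
    integral_const_mul _ _
  have hI3 : ∫ x in Icc (xs - s) (xs + s), g x ≤ ∫ x in Icc a b, g x :=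
    setIntegral_mono_set hg_cont.integrableOn_Icc
      (Filter.Eventually.of_forall hg0) (HasSubset.Subset.eventuallyLE hsub)
  have hI4 : ∫ x in Icc (xs - s) (xs + s), g x = s^2/2 := by
    rw [integral_Icc_eq_integral_Ioc,
      ← intervalIntegral.integral_of_le (by linarith : xs - s ≤ xs + s),
      ← intervalIntegral.integral_add_adjacent_intervals
        (hg_cont.intervalIntegrable (xs - s) xs) (hg_cont.intervalIntegrable xs (xs + s))]
    have e1 : ∫ x in (xs - s)..xs, g x = ∫ x in (xs - s)..xs, (x + (s - xs))/2 := by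
      apply intervalIntegral.integral_congr
      intro x hx
      rw [uIcc_of_le (by linarith)] at hx
      simp only [hg_def]
      rw [abs_of_nonpos (by linarith [hx.2]), max_eq_right (by linarith [hx.1])]
      ring
    have e2 : ∫ x in xs..(xs + s), g x = ∫ x in xs..(xs + s), (-x + (s + xs))/2 := by
      apply intervalIntegral.integral_congr
      intro x hx
      rw [uIcc_of_le (by linarith)] at hx
      simp only [hg_def]
      rw [abs_of_nonneg (by linarith [hx.1]), max_eq_right (by linarith [hx.2])]
      ring
    rw [e1, e2, lin_int1, lin_int2]
    ring
  have hval : ε^3/(64*D^2) = ε/2 * (s^2/2) := by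
    rw [hs_def]; field_simp; ring
  have hmain : ε^3/(64*D^2) ≤ ∫ x in Icc a b, g x * (p x - q x) := by
    have h1 : ε/2 * (s^2/2) ≤ ε/2 * ∫ x in Icc a b, g x := by
      apply mul_le_mul_of_nonneg_left _ (by positivity)
      rw [← hI4]; exact hI3
    linarith [hI1, hI2.symm.le]
  have hgtest : IsBLTestOn a b g :=
    ⟨s/2, 1/2, by positivity, by norm_num, by linarith,
      fun x _ => by rw [abs_of_nonneg (hg0 x)]; exact hgc x,
      fun x _ y _ => hglip x y⟩
  refine ⟨g, hgtest, hmain, ?_⟩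
  -- bounded above
  set M : ℝ := |p a - q a| + 2*D*(b-a) with hM_def
  have hM : ∀ x ∈ Icc a b, |p x - q x| ≤ M := by
    intro x hx
    have ha : a ∈ Icc a b := ⟨le_refl a, hab.le⟩
    have hp := hplip x hx a ha
    have hq := hqlip x hx a ha
    have hxa : |x - a| ≤ b - a := by
      rw [abs_of_nonneg (by linarith [hx.1])]; linarith [hx.2]
    have hrw : p x - q x = (p x - p a) + (p a - q a) + (q a - q x) := by ring
    rw [hrw]
    refine le_trans (abs_add_three _ _ _) ?_
    have hq' : |q a - q x| ≤ D * |x - a| := by rw [abs_sub_comm]; exact hq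
    have hmul : D * |x - a| ≤ D * (b - a) := mul_le_mul_of_nonneg_left hxa hD0.le
    rw [hM_def]; linarith
  have hbdd : BddAbove {r : ℝ | ∃ g : ℝ → ℝ, IsBLTestOn a b g ∧
      r = |∫ x in Icc a b, g x * (p x - q x)|} := by
    refine ⟨M * (b - a), ?_⟩
    rintro r ⟨g', ⟨c, L, hc0, hL0, hcL, hgc', hglip'⟩, rfl⟩
    have hg'cont : ContinuousOn g' (Icc a b) := by
      have : LipschitzOnWith (Real.toNNReal L) g' (Icc a b) := by
        apply LipschitzOnWith.of_dist_le_mul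
        intro x hx y hy
        simp only [Real.dist_eq]
        rw [Real.coe_toNNReal _ hL0]
        exact hglip' x hx y hy
      exact this.continuousOn
    have hbound := norm_setIntegral_le_of_norm_le_const (μ := volume) (s := Icc a b)
      (f := fun x => g' x * (p x - q x)) (C := M) measure_Icc_lt_top
      (fun x hx => by
        rw [Real.norm_eq_abs, abs_mul]
        have h1 : |g' x| ≤ 1 := le_trans (hgc' x hx) (by linarith)
        have h2 := hM x hx
        calc |g' x| * |p x - q x| ≤ 1 * M :=
          mul_le_mul h1 h2 (abs_nonneg _) one_pos.le
        _ = M := one_mul M)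
    rw [Real.norm_eq_abs, measureReal_def, Real.volume_Icc, ENNReal.toReal_ofReal (by linarith)] at hbound
    exact hbound
  have hmem : |∫ x in Icc a b, g x * (p x - q x)| ∈ {r : ℝ | ∃ g : ℝ → ℝ, IsBLTestOn a b g ∧
      r = |∫ x in Icc a b, g x * (p x - q x)|} := ⟨g, hgtest, rfl⟩
  refine le_trans (le_trans hmain (le_abs_self _)) (le_csSup hbdd hmem)
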